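/- Let K and N be positive integers, ε > 0, f₀, x₀, λ ∈ ℝ, f(t) = f₀ + λ·t, and let x : ℕ → ℝ satisfy x(0) = x₀ and x(t+1) = (K·f(t) + N·x(t))/(K+N) for all t ∈ ℕ. If |f₀ − x₀| ≤ ε and |λ| ≤ K·ε/(K+N), then |f(t) − x(t)| ≤ ε for all t ∈ ℕ. -/

import Mathlib

theorem hk_influence_forever
    (K N : ℕ) (hK : 0 < K) (hN : 0 < N) (ε : ℝ) (hε : 0 < ε)
    (f₀ x₀ l : ℝ) (f : ℕ → ℝ) (hf : ∀ t : ℕ, f t = f₀ + l * (t : ℝ))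
    (x : ℕ → ℝ) (hx0 : x 0 = x₀)
    (hx : ∀ t : ℕ, x (t + 1) = ((K : ℝ) * f t + (N : ℝ) * x t) / ((K : ℝ) + (N : ℝ)))
    (h1 : |f₀ - x₀| ≤ ε)
    (h2 : |l| ≤ (K : ℝ) * ε / ((K : ℝ) + (N : ℝ))) :
    ∀ t : ℕ, |f t - x t| ≤ ε := by
  have hKpos : (0:ℝ) < (K:ℝ) := by exact_mod_cast hK
  have hNpos : (0:ℝ) < (N:ℝ) := by exact_mod_cast hN
  have hKN : (0:ℝ) < (K:ℝ) + (N:ℝ) := by linarith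
  intro t
  induction t with
  | zero => simpa [hf 0, hx0] using h1
  | succ t ih =>
    have hstep : f (t+1) - x (t+1) = l + ((N:ℝ)/((K:ℝ)+(N:ℝ))) * (f t - x t) := by
      rw [hx t, hf (t+1), hf t]
      push_cast
      field_simp
      ring
    calc |f (t+1) - x (t+1)| ≤ |l| + |((N:ℝ)/((K:ℝ)+(N:ℝ))) * (f t - x t)| := by
          rw [hstep]; exact abs_add_le _ _
      _ ≤ (K:ℝ) * ε / ((K:ℝ)+(N:ℝ)) + ((N:ℝ)/((K:ℝ)+(N:ℝ))) * ε := by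
          gcongr
          rw [abs_mul, abs_of_pos (div_pos hNpos hKN)]
          gcongr
      _ = ε := by field_simp
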